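/- Let 𝔤 be the 3-dimensional Heisenberg Lie algebra with basis P, Q, E, [P,Q] = E, equipped with the ℓ¹-norm n making P, Q, E unit vectors. Fix 0 ≤ R < 1, ε with 2ε < 1 − R, and set a_k = P^k/(k!)^{R+ε}, b_k = Q^k/(k!)^{R+ε} in the symmetric algebra. Then n_R(a_k) = n_R(b_k) = (k!)^{−ε} → 0 while n_R(a_k ⋆ b_k) ≥ (k!)^{1−R−2ε} → ∞; hence the Gutt star product is not continuous on Sym_R(𝔤) for R < 1. -/
import Mathlib


open Finset Filter

private lemma fact_atTop : Tendsto (fun k : ℕ => (k.factorial : ℝ)) atTop atTop := by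
  apply tendsto_atTop_mono (f := fun k : ℕ => (k : ℝ))
  · intro k; exact_mod_cast Nat.self_le_factorial k
  · exact tendsto_natCast_atTop_atTop

/-- Failure of continuity of the Gutt star product on `Sym_R(𝔤)` for `R < 1`, for the
3-dimensional Heisenberg algebra with the `ℓ¹`-norm (`P`, `Q`, `E` unit vectors,
`[P,Q] = E`).  With `a_k = P^k/(k!)^{R+ε}`, `b_k = Q^k/(k!)^{R+ε}` one has
`n_R(a_k) = n_R(b_k) = (k!)^{−ε} → 0`, while
`n_R(a_k ⋆ b_k) = Σ_{j≤k} (k!)² j! ((2k−j)!)^R /((k−j)!² (j!)² (k!)^{2R+2ε})`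
is bounded below by `(k!)^{1−R−2ε} → ∞`; hence there is no `c > 0` with
`n_R(a_k ⋆ b_k) ≤ (cn)_R(a_k)(cn)_R(b_k) = (c^k (k!)^{−ε})²`. -/
theorem stmt17 (R ε : ℝ) (hR0 : 0 ≤ R) (hR1 : R < 1) (hε : 0 < ε)
    (hε2 : 2 * ε < 1 - R) :
    let nRa : ℕ → ℝ := fun k => ((k.factorial : ℝ)) ^ (-ε)
    let s : ℕ → ℝ := fun k => ∑ j ∈ range (k + 1),
      (k.factorial : ℝ) ^ 2 * (j.factorial : ℝ) * (((2 * k - j).factorial : ℝ)) ^ R /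
        (((k - j).factorial : ℝ) ^ 2 * (j.factorial : ℝ) ^ 2 *
          ((k.factorial : ℝ)) ^ (2 * R + 2 * ε))
    (Tendsto nRa atTop (nhds 0)) ∧
    (∀ k : ℕ, ((k.factorial : ℝ)) ^ (1 - R - 2 * ε) ≤ s k) ∧
    (Tendsto s atTop atTop) ∧
    ¬ ∃ c : ℝ, 0 < c ∧ ∀ k : ℕ, s k ≤ (c ^ k * nRa k) * (c ^ k * nRa k) := by
  intro nRa s
  have hδ : (0:ℝ) < 1 - R - 2 * ε := by linarith
  have hlb : ∀ k : ℕ, ((k.factorial : ℝ)) ^ (1 - R - 2 * ε) ≤ s k := by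
    intro k
    have hx : (0:ℝ) < (k.factorial : ℝ) := by exact_mod_cast k.factorial_pos
    set x : ℝ := (k.factorial : ℝ) with hxdef
    have hterm : x ^ (1 - R - 2 * ε) =
        (k.factorial : ℝ) ^ 2 * (k.factorial : ℝ) * (((2 * k - k).factorial : ℝ)) ^ R /
        (((k - k).factorial : ℝ) ^ 2 * (k.factorial : ℝ) ^ 2 *
          ((k.factorial : ℝ)) ^ (2 * R + 2 * ε)) := by
      have h1 : 2 * k - k = k := by omega
      have h2 : k - k = 0 := Nat.sub_self k
      rw [h1, h2, Nat.factorial_zero]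
      have hA : x ^ ((3:ℝ) + R) = x ^ 2 * x * x ^ R := by
        rw [Real.rpow_add hx]
        congr 1
        rw [show (3:ℝ) = ((3:ℕ):ℝ) by norm_num, Real.rpow_natCast]
        ring
      have hB : x ^ ((2:ℝ) + (2 * R + 2 * ε)) = x ^ 2 * x ^ (2 * R + 2 * ε) := by
        rw [Real.rpow_add hx]
        congr 1
        rw [show (2:ℝ) = ((2:ℕ):ℝ) by norm_num, Real.rpow_natCast]
      push_cast
      rw [← hxdef, one_pow, one_mul, ← hA, ← hB, ← Real.rpow_sub hx]
      ring_nf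
    rw [hterm]
    apply Finset.single_le_sum (f := fun j => (k.factorial : ℝ) ^ 2 * (j.factorial : ℝ) *
        (((2 * k - j).factorial : ℝ)) ^ R /
        (((k - j).factorial : ℝ) ^ 2 * (j.factorial : ℝ) ^ 2 *
          ((k.factorial : ℝ)) ^ (2 * R + 2 * ε)))
    · intro j _
      have h1 : (0:ℝ) < (j.factorial : ℝ) := by exact_mod_cast j.factorial_pos
      have h2 : (0:ℝ) < ((2*k - j).factorial : ℝ) := by exact_mod_cast (2*k-j).factorial_pos
      have h3 : (0:ℝ) < ((k - j).factorial : ℝ) := by exact_mod_cast (k-j).factorial_pos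
      positivity
    · exact Finset.self_mem_range_succ k
  have hlbt : Tendsto (fun k : ℕ => ((k.factorial : ℝ)) ^ (1 - R - 2 * ε)) atTop atTop :=
    (tendsto_rpow_atTop hδ).comp fact_atTop
  refine ⟨?_, hlb, tendsto_atTop_mono hlb hlbt, ?_⟩
  · exact (tendsto_rpow_neg_atTop hε).comp fact_atTop
  · rintro ⟨c, hc, h⟩
    -- from h and hlb : (k!)^(1-R) ≤ (c^2)^k for all k
    have key : ∀ k : ℕ, ((k.factorial : ℝ)) ^ (1 - R) ≤ (c ^ 2) ^ k := by
      intro k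
      have hx : (0:ℝ) < (k.factorial : ℝ) := by exact_mod_cast k.factorial_pos
      have h1 := (hlb k).trans (h k)
      have h2 : (c ^ k * nRa k) * (c ^ k * nRa k) = (c ^ 2) ^ k * (k.factorial : ℝ) ^ (-(2*ε)) := by
        show (c ^ k * (k.factorial:ℝ) ^ (-ε)) * (c ^ k * (k.factorial:ℝ) ^ (-ε)) = _
        rw [← pow_mul, two_mul, pow_add]
        rw [show (-(2*ε)) = -ε + -ε by ring, Real.rpow_add hx]
        ring
      rw [h2] at h1
      have h3 : ((k.factorial : ℝ)) ^ (1 - R - 2*ε) * (k.factorial : ℝ) ^ (2*ε) ≤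
          ((c ^ 2) ^ k * (k.factorial : ℝ) ^ (-(2*ε))) * (k.factorial : ℝ) ^ (2*ε) := by
        apply mul_le_mul_of_nonneg_right h1 (Real.rpow_nonneg hx.le _)
      rw [← Real.rpow_add hx, mul_assoc, ← Real.rpow_add hx] at h3
      simpa using h3
    -- contradiction via superexponential growth of factorial
    have hR' : (0:ℝ) < 1 - R := by linarith
    set y : ℝ := (c ^ 2) ^ ((1:ℝ) / (1 - R)) with hy
    have hy0 : 0 < y := Real.rpow_pos_of_pos (by positivity) _
    have hev : ∀ᶠ k : ℕ in atTop, y ^ k / (k.factorial : ℝ) < 1 :=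
      (FloorSemiring.tendsto_pow_div_factorial_atTop y).eventually_lt_const one_pos
    obtain ⟨k, hk⟩ := hev.exists
    have hx : (0:ℝ) < (k.factorial : ℝ) := by exact_mod_cast k.factorial_pos
    have hyk : y ^ k < (k.factorial : ℝ) := by
      rwa [div_lt_one hx] at hk
    have hlt : (y ^ k) ^ (1 - R) < ((k.factorial : ℝ)) ^ (1 - R) :=
      Real.rpow_lt_rpow (by positivity) hyk hR'
    have heq : (y ^ k) ^ (1 - R) = (c ^ 2) ^ k := by
      rw [← Real.rpow_natCast y k, ← Real.rpow_mul hy0.le, hy,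
        ← Real.rpow_natCast (c^2) k, ← Real.rpow_mul (by positivity)]
      congr 1
      field_simp
    rw [heq] at hlt
    exact absurd (key k) (not_le.mpr hlt)
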